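/- (Euler–Maruyama contraction.) Assume γ ≥ 2√M and 0 < h < 1/(2γ). Let (ξ_k)_{k≥1} be an arbitrary sequence of vectors in ℝⁿ, and let (x_k, v_k) and (x̃_k, ṽ_k) be two trajectories of the Euler–Maruyama scheme x_{k+1} = x_k + h v_k, v_{k+1} = v_k − h∇U(x_k) − hγ v_k + √(2γh) ξ_{k+1}, driven by the same noise sequence (ξ_k) (synchronous coupling). Then with a = 1/M and b = 1/γ, for every k ≥ 0, ‖(x_k − x̃_k, v_k − ṽ_k)‖_{a,b} ≤ (1 − mh/(2γ))^{k/2} · ‖(x_0 − x̃_0, v_0 − ṽ_0)‖_{a,b}. -/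

import Mathlib

set_option maxHeartbeats 1000000

open scoped RealInnerProductSpace


lemma neg_le_of_sq_le_sq_aux {x y : ℝ} (h : x ^ 2 ≤ y ^ 2) (hy : 0 ≤ y) : -y ≤ x := by
  have h2 := Real.sqrt_le_sqrt h
  rw [Real.sqrt_sq_eq_abs, Real.sqrt_sq_eq_abs, abs_of_nonneg hy] at h2
  linarith [neg_abs_le x]

lemma key_scalar (m M γ h X W P A C G : ℝ) (hm : 0 < m) (hmM : m < M)
    (hγ0 : 0 < γ) (hγ2 : 4 * M ≤ γ ^ 2) (hh : 0 < h) (hh2 : h * γ < 1 / 2)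
    (hX : 0 ≤ X) (hW : 0 ≤ W) (hG : 0 ≤ G)
    (hP : P ^ 2 ≤ X * W) (hC : C ^ 2 ≤ W * G)
    (hA1 : m * X ≤ A) (hA2 : A ≤ M * X) (hcoco : G ≤ M * A) :
    (X + 2 * h * P + h ^ 2 * W)
      + (2 / γ) * ((1 - h * γ) * P - h * A + h * (1 - h * γ) * W - h ^ 2 * C)
      + (1 / M) * ((1 - h * γ) ^ 2 * W - 2 * h * (1 - h * γ) * C + h ^ 2 * G)
      ≤ (1 - m * h / (2 * γ)) * (X + (2 / γ) * P + (1 / M) * W) := by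
  have hM0 : 0 < M := hm.trans hmM
  have hA0 : 0 ≤ A := le_trans (by positivity) hA1
  have hS : 0 ≤ 2 * γ * C + M * A + γ ^ 2 * W := by
    have h1 : (2 * γ * C) ^ 2 ≤ (M * A + γ ^ 2 * W) ^ 2 := by
      have c1 : 4 * γ ^ 2 * C ^ 2 ≤ 4 * γ ^ 2 * (W * G) :=
        mul_le_mul_of_nonneg_left hC (by positivity)
      have c2 : 4 * γ ^ 2 * W * G ≤ 4 * γ ^ 2 * W * (M * A) :=
        mul_le_mul_of_nonneg_left hcoco (by positivity)
      nlinarith [sq_nonneg (M * A - γ ^ 2 * W)]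
    linarith [neg_le_of_sq_le_sq_aux h1 (by positivity)]
  have hT3 : 0 ≤ γ ^ 2 * X - 4 * γ * P + 4 * W := by
    have h1 : (4 * γ * P) ^ 2 ≤ (γ ^ 2 * X + 4 * W) ^ 2 := by
      have c1 : 16 * γ ^ 2 * P ^ 2 ≤ 16 * γ ^ 2 * (X * W) :=
        mul_le_mul_of_nonneg_left hP (by positivity)
      nlinarith [sq_nonneg (γ ^ 2 * X - 4 * W)]
    linarith [neg_le_of_sq_le_sq_aux (by nlinarith [h1] : (-(4 * γ * P)) ^ 2 ≤ (γ ^ 2 * X + 4 * W) ^ 2) (by positivity)]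
  have hκ : 0 ≤ γ - h * γ ^ 2 + h * M := by nlinarith
  have hT1 : 0 ≤ 4 * h * γ ^ 3 * (M * A - G) := by
    have : 0 ≤ M * A - G := by linarith
    positivity
  have hT2 : 0 ≤ 4 * γ * (γ - h * γ ^ 2 + h * M) * (2 * γ * C + M * A + γ ^ 2 * W) := by positivity
  have hT3' : 0 ≤ m * M * (γ ^ 2 * X - 4 * γ * P + 4 * W) := by positivity
  have hT4 : 0 ≤ 4 * γ * (γ * M - h * M ^ 2) * (A - m * X) := by
    have h1 : 0 ≤ γ * M - h * M ^ 2 := by nlinarith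
    have h2 : 0 ≤ A - m * X := by linarith
    positivity
  have hT5 : 0 ≤ γ * m * M * (γ - 4 * h * M) * X := by
    have h1 : 0 ≤ γ - 4 * h * M := by nlinarith
    positivity
  have hT6 : 0 ≤ (4 * γ ^ 4 - 8 * γ ^ 2 * M - 2 * m * γ ^ 2 - 4 * m * M) * W := by
    have e1 : 4 * γ ^ 2 * (4 * M) ≤ 4 * γ ^ 2 * γ ^ 2 :=
      mul_le_mul_of_nonneg_left hγ2 (by positivity)
    have e2 : m * γ ^ 2 ≤ M * γ ^ 2 := mul_le_mul_of_nonneg_right hmM.le (by positivity)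
    have e3 : m * M ≤ M * γ ^ 2 := by nlinarith [mul_le_mul_of_nonneg_right hmM.le hM0.le]
    have h1 : 0 ≤ 4 * γ ^ 4 - 8 * γ ^ 2 * M - 2 * m * γ ^ 2 - 4 * m * M := by nlinarith
    positivity
  clear hP hC hA1 hA2 hcoco hX hW hG hA0
  have hsum : 0 ≤ h * (4 * h * γ ^ 3 * (M * A - G)
      + 4 * γ * (γ - h * γ ^ 2 + h * M) * (2 * γ * C + M * A + γ ^ 2 * W)
      + m * M * (γ ^ 2 * X - 4 * γ * P + 4 * W)
      + 4 * γ * (γ * M - h * M ^ 2) * (A - m * X)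
      + γ * m * M * (γ - 4 * h * M) * X
      + (4 * γ ^ 4 - 8 * γ ^ 2 * M - 2 * m * γ ^ 2 - 4 * m * M) * W) := by
    exact mul_nonneg hh.le (by linarith)
  rw [← sub_nonneg]
  have hid : (1 - m * h / (2 * γ)) * (X + (2 / γ) * P + (1 / M) * W)
      - ((X + 2 * h * P + h ^ 2 * W)
      + (2 / γ) * ((1 - h * γ) * P - h * A + h * (1 - h * γ) * W - h ^ 2 * C)
      + (1 / M) * ((1 - h * γ) ^ 2 * W - 2 * h * (1 - h * γ) * C + h ^ 2 * G))
      = (h * (4 * h * γ ^ 3 * (M * A - G)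
      + 4 * γ * (γ - h * γ ^ 2 + h * M) * (2 * γ * C + M * A + γ ^ 2 * W)
      + m * M * (γ ^ 2 * X - 4 * γ * P + 4 * W)
      + 4 * γ * (γ * M - h * M ^ 2) * (A - m * X)
      + γ * m * M * (γ - 4 * h * M) * X
      + (4 * γ ^ 4 - 8 * γ ^ 2 * M - 2 * m * γ ^ 2 - 4 * m * M) * W)) / (4 * γ ^ 3 * M) := by
    field_simp
    ring
  rw [hid]
  exact div_nonneg hsum (by positivity)


variable {n : ℕ}

local notation "E" => EuclideanSpace ℝ (Fin n)

lemma grad_contDiff {U : E → ℝ} (hU : ContDiff ℝ 2 U) : ContDiff ℝ 1 (gradient U) := by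
  have h1 : ContDiff ℝ 1 (fun x => fderiv ℝ U x) := hU.fderiv_right (by norm_num)
  exact ((InnerProductSpace.toDual ℝ _).symm.contDiff.comp h1 : _)

lemma line_hasDerivAt (p e : E) (t : ℝ) : HasDerivAt (fun s : ℝ => p + s • e) e t := by
  simpa using ((hasDerivAt_id t).smul_const e).const_add p

lemma gradU_line_hasDerivAt {U : E → ℝ} (hU : ContDiff ℝ 2 U) (p e w : E) (t : ℝ) :
    HasDerivAt (fun s : ℝ => ⟪gradient U (p + s • e), w⟫)
      ⟪fderiv ℝ (gradient U) (p + t • e) e, w⟫ t := by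
  have hgd := (((grad_contDiff hU).differentiable one_ne_zero) (p + t • e)).hasFDerivAt
  have hcomp : HasDerivAt (fun s : ℝ => gradient U (p + s • e))
      (fderiv ℝ (gradient U) (p + t • e) e) t :=
    hgd.comp_hasDerivAt (f := fun s : ℝ => p + s • e) t (line_hasDerivAt p e t)
  simpa using hcomp.inner ℝ (hasDerivAt_const t w)

lemma U_line_hasDerivAt {U : E → ℝ} (hU : ContDiff ℝ 2 U) (p e : E) (t : ℝ) :
    HasDerivAt (fun s : ℝ => U (p + s • e)) ⟪gradient U (p + t • e), e⟫ t := by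
  have hfd : HasFDerivAt U (fderiv ℝ U (p + t • e)) (p + t • e) :=
    ((hU.differentiable (by norm_num)) (p + t • e)).hasFDerivAt
  have hcomp : HasDerivAt (fun s : ℝ => U (p + s • e)) (fderiv ℝ U (p + t • e) e) t :=
    hfd.comp_hasDerivAt t (line_hasDerivAt p e t)
  have : ⟪gradient U (p + t • e), e⟫ = fderiv ℝ U (p + t • e) e :=
    InnerProductSpace.toDual_symm_apply
  rwa [this]

lemma grad_mono {U : E → ℝ} {m M : ℝ} (hU : ContDiff ℝ 2 U)
    (hHess : ∀ x d : E, m * ‖d‖ ^ 2 ≤ ⟪fderiv ℝ (gradient U) x d, d⟫ ∧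
      ⟪fderiv ℝ (gradient U) x d, d⟫ ≤ M * ‖d‖ ^ 2) (p q : E) :
    m * ‖p - q‖ ^ 2 ≤ ⟪gradient U p - gradient U q, p - q⟫ ∧
      ⟪gradient U p - gradient U q, p - q⟫ ≤ M * ‖p - q‖ ^ 2 := by
  set e := p - q with he
  have hF : ∀ t : ℝ, HasDerivAt (fun s : ℝ => ⟪gradient U (q + s • e), e⟫)
      ⟪fderiv ℝ (gradient U) (q + t • e) e, e⟫ t := gradU_line_hasDerivAt hU q e e
  obtain ⟨c, -, hc⟩ := exists_hasDerivAt_eq_slope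
    (fun s : ℝ => ⟪gradient U (q + s • e), e⟫)
    (fun t : ℝ => ⟪fderiv ℝ (gradient U) (q + t • e) e, e⟫) zero_lt_one
    (fun s _ => (hF s).continuousAt.continuousWithinAt) (fun s _ => hF s)
  have h1 : q + (1:ℝ) • e = p := by rw [one_smul, he]; abel
  have h0 : q + (0:ℝ) • e = q := by simp
  rw [h1, h0, show (1:ℝ) - 0 = 1 by norm_num, div_one, ← inner_sub_left] at hc
  constructor
  · rw [← hc]; exact (hHess (q + c • e) e).1
  · rw [← hc]; exact (hHess (q + c • e) e).2

lemma grad_descent {U : E → ℝ} {m M : ℝ} (hU : ContDiff ℝ 2 U)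
    (hHess : ∀ x d : E, m * ‖d‖ ^ 2 ≤ ⟪fderiv ℝ (gradient U) x d, d⟫ ∧
      ⟪fderiv ℝ (gradient U) x d, d⟫ ≤ M * ‖d‖ ^ 2) (p q : E) :
    U q ≤ U p + ⟪gradient U p, q - p⟫ + M / 2 * ‖q - p‖ ^ 2 := by
  set e := q - p with he
  set k := ⟪gradient U p, e⟫ with hk
  set c2 := M / 2 * ‖e‖ ^ 2 with hc2
  set ψ := fun s : ℝ => U (p + s • e) - s * k - s ^ 2 * c2 with hψ
  have hψ' : ∀ s : ℝ, HasDerivAt ψ (⟪gradient U (p + s • e), e⟫ - k - 2 * s * c2) s := by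
    intro s
    have h1 := (U_line_hasDerivAt hU p e s).sub ((hasDerivAt_id s).mul_const k)
    have h2 := (hasDerivAt_pow 2 s).mul_const c2
    exact (h1.sub h2).congr_deriv (by simp)
  have hbound : ∀ s ∈ Set.Ioo (0:ℝ) 1,
      ⟪gradient U (p + s • e), e⟫ - k - 2 * s * c2 ≤ 0 := by
    intro s hs
    have hs0 : 0 < s := hs.1
    have hgm := (grad_mono hU hHess (p + s • e) p).2
    have hsub : p + s • e - p = s • e := by abel
    rw [hsub] at hgm
    have hinner : ⟪gradient U (p + s • e) - gradient U p, s • e⟫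
        = s * ⟪gradient U (p + s • e) - gradient U p, e⟫ := real_inner_smul_right _ _ _
    have hnorm : ‖s • e‖ ^ 2 = s ^ 2 * ‖e‖ ^ 2 := by
      rw [norm_smul, mul_pow, Real.norm_eq_abs, sq_abs]
    rw [hinner, hnorm] at hgm
    have hIe : ⟪gradient U (p + s • e) - gradient U p, e⟫ ≤ M * s * ‖e‖ ^ 2 := by
      have := (mul_le_mul_iff_right₀ hs0).mp (by nlinarith : s * ⟪gradient U (p + s • e) - gradient U p, e⟫ ≤ s * (M * s * ‖e‖ ^ 2))
      exact this
    rw [inner_sub_left] at hIe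
    rw [hc2, hk]
    nlinarith [hIe]
  have hanti : AntitoneOn ψ (Set.Icc (0:ℝ) 1) := by
    apply antitoneOn_of_deriv_nonpos (convex_Icc 0 1)
    · exact fun s _ => ((hψ' s).differentiableAt.continuousAt).continuousWithinAt
    · intro s hs
      exact (hψ' s).differentiableAt.differentiableWithinAt
    · intro s hs
      rw [interior_Icc] at hs
      rw [(hψ' s).deriv]
      exact hbound s hs
  have h10 : ψ 1 ≤ ψ 0 := hanti (Set.mem_Icc.2 ⟨le_refl 0, zero_le_one⟩)
    (Set.mem_Icc.2 ⟨zero_le_one, le_refl 1⟩) zero_le_one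
  have hψ0 : ψ 0 = U p := by simp [hψ]
  have hψ1 : ψ 1 = U q - k - c2 := by
    have hpe : p + e = q := by rw [he]; abel
    simp [hψ, hpe]
  rw [hψ0, hψ1] at h10
  linarith

lemma grad_convex_lower {U : E → ℝ} {m M : ℝ} (hm0 : 0 ≤ m) (hU : ContDiff ℝ 2 U)
    (hHess : ∀ x d : E, m * ‖d‖ ^ 2 ≤ ⟪fderiv ℝ (gradient U) x d, d⟫ ∧
      ⟪fderiv ℝ (gradient U) x d, d⟫ ≤ M * ‖d‖ ^ 2) (p q : E) :
    U p + ⟪gradient U p, q - p⟫ ≤ U q := by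
  set e := q - p with he
  have hφ : ∀ t : ℝ, HasDerivAt (fun s : ℝ => U (p + s • e))
      ⟪gradient U (p + t • e), e⟫ t := U_line_hasDerivAt hU p e
  obtain ⟨c, hcmem, hc⟩ := exists_hasDerivAt_eq_slope
    (fun s : ℝ => U (p + s • e)) (fun t : ℝ => ⟪gradient U (p + t • e), e⟫) zero_lt_one
    (fun s _ => (hφ s).continuousAt.continuousWithinAt) (fun s _ => hφ s)
  have h1 : p + (1:ℝ) • e = q := by rw [one_smul, he]; abel
  have h0 : p + (0:ℝ) • e = p := by simp
  rw [h1, h0, show (1:ℝ) - 0 = 1 by norm_num, div_one] at hc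
  have hlow : ⟪gradient U p, e⟫ ≤ ⟪gradient U (p + c • e), e⟫ := by
    have hgm := (grad_mono hU hHess (p + c • e) p).1
    have hsub : p + c • e - p = c • e := by abel
    rw [hsub] at hgm
    have hinner : ⟪gradient U (p + c • e) - gradient U p, c • e⟫
        = c * ⟪gradient U (p + c • e) - gradient U p, e⟫ := real_inner_smul_right _ _ _
    rw [hinner] at hgm
    have hnn : 0 ≤ c * ⟪gradient U (p + c • e) - gradient U p, e⟫ :=
      le_trans (by positivity) hgm
    have := (mul_nonneg_iff_of_pos_left hcmem.1).mp hnn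
    rw [inner_sub_left] at this
    linarith
  linarith [hlow, hc]

lemma grad_coco_half {U : E → ℝ} {m M : ℝ} (hm0 : 0 ≤ m) (hM0 : 0 < M) (hU : ContDiff ℝ 2 U)
    (hHess : ∀ x d : E, m * ‖d‖ ^ 2 ≤ ⟪fderiv ℝ (gradient U) x d, d⟫ ∧
      ⟪fderiv ℝ (gradient U) x d, d⟫ ≤ M * ‖d‖ ^ 2) (p q : E) :
    U q + ⟪gradient U q, p - q⟫ + ‖gradient U p - gradient U q‖ ^ 2 / (2 * M) ≤ U p := by
  set g := gradient U p - gradient U q with hg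
  set z := p - (1 / M) • g with hz
  have d1 := grad_descent hU hHess p z
  have d2 := grad_convex_lower hm0 hU hHess q z
  have hzp : z - p = -((1 / M) • g) := by rw [hz]; abel
  have hzq : z - q = (p - q) - (1 / M) • g := by rw [hz]; abel
  have e1 : ⟪gradient U p, z - p⟫ = -(1 / M * ⟪gradient U p, g⟫) := by
    rw [hzp, inner_neg_right, real_inner_smul_right]
  have e2 : ‖z - p‖ ^ 2 = (1 / M) ^ 2 * ‖g‖ ^ 2 := by
    rw [hzp, norm_neg, norm_smul, mul_pow, Real.norm_eq_abs, sq_abs]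
  have e3 : ⟪gradient U q, z - q⟫ = ⟪gradient U q, p - q⟫ - 1 / M * ⟪gradient U q, g⟫ := by
    rw [hzq, inner_sub_right, real_inner_smul_right]
  have e4 : ⟪gradient U p, g⟫ - ⟪gradient U q, g⟫ = ‖g‖ ^ 2 := by
    rw [← inner_sub_left, ← hg, real_inner_self_eq_norm_sq]
  rw [e1, e2] at d1
  rw [e3] at d2
  have efield : M / 2 * ((1 / M) ^ 2 * ‖g‖ ^ 2) = ‖g‖ ^ 2 / (2 * M) := by
    field_simp
  have efield2 : 1 / M * ⟪gradient U p, g⟫ - 1 / M * ⟪gradient U q, g⟫ = ‖g‖ ^ 2 / M := by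
    rw [← mul_sub, e4]; field_simp
  have hsplit : ‖g‖ ^ 2 / M = ‖g‖ ^ 2 / (2 * M) + ‖g‖ ^ 2 / (2 * M) := by
    field_simp; ring
  linarith

lemma grad_coco {U : E → ℝ} {m M : ℝ} (hm0 : 0 ≤ m) (hM0 : 0 < M) (hU : ContDiff ℝ 2 U)
    (hHess : ∀ x d : E, m * ‖d‖ ^ 2 ≤ ⟪fderiv ℝ (gradient U) x d, d⟫ ∧
      ⟪fderiv ℝ (gradient U) x d, d⟫ ≤ M * ‖d‖ ^ 2) (p q : E) :
    ‖gradient U p - gradient U q‖ ^ 2 ≤ M * ⟪gradient U p - gradient U q, p - q⟫ := by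
  have h1 := grad_coco_half hm0 hM0 hU hHess p q
  have h2 := grad_coco_half hm0 hM0 hU hHess q p
  have e1 : ‖gradient U q - gradient U p‖ = ‖gradient U p - gradient U q‖ := norm_sub_rev _ _
  rw [e1] at h2
  have e2 : ⟪gradient U p, q - p⟫ = -⟪gradient U p, p - q⟫ := by
    rw [← inner_neg_right]; congr 1; abel
  rw [e2] at h2
  have e3 : ⟪gradient U p - gradient U q, p - q⟫
      = ⟪gradient U p, p - q⟫ - ⟪gradient U q, p - q⟫ := inner_sub_left _ _ _
  have hsum : ‖gradient U p - gradient U q‖ ^ 2 / M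
      ≤ ⟪gradient U p, p - q⟫ - ⟪gradient U q, p - q⟫ := by
    have hsplit : ‖gradient U p - gradient U q‖ ^ 2 / M
        = ‖gradient U p - gradient U q‖ ^ 2 / (2 * M)
          + ‖gradient U p - gradient U q‖ ^ 2 / (2 * M) := by field_simp; ring
    linarith
  rw [e3]
  calc ‖gradient U p - gradient U q‖ ^ 2
      = M * (‖gradient U p - gradient U q‖ ^ 2 / M) := by field_simp
    _ ≤ M * (⟪gradient U p, p - q⟫ - ⟪gradient U q, p - q⟫) :=
        mul_le_mul_of_nonneg_left hsum hM0.le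


/-- The modified Euclidean norm `‖(x,v)‖_{a,b} = √(‖x‖² + 2b⟨x,v⟩ + a‖v‖²)`. -/
noncomputable def modNorm {n : ℕ} (a b : ℝ)
    (z : EuclideanSpace ℝ (Fin n) × EuclideanSpace ℝ (Fin n)) : ℝ :=
  Real.sqrt (‖z.1‖ ^ 2 + 2 * b * ⟪z.1, z.2⟫ + a * ‖z.2‖ ^ 2)

theorem euler_maruyama_contraction {n : ℕ} (m M γ h : ℝ)
    (U : EuclideanSpace ℝ (Fin n) → ℝ)
    (hm : 0 < m) (hmM : m < M) (hU : ContDiff ℝ 2 U)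
    (hHess : ∀ x d : EuclideanSpace ℝ (Fin n),
      m * ‖d‖ ^ 2 ≤ ⟪fderiv ℝ (gradient U) x d, d⟫ ∧
        ⟪fderiv ℝ (gradient U) x d, d⟫ ≤ M * ‖d‖ ^ 2)
    (hγ : γ ≥ 2 * Real.sqrt M) (hh : 0 < h) (hh2 : h < 1 / (2 * γ))
    (ξ : ℕ → EuclideanSpace ℝ (Fin n))
    (x v x' v' : ℕ → EuclideanSpace ℝ (Fin n))
    (hx : ∀ k, x (k + 1) = x k + h • v k)
    (hv : ∀ k, v (k + 1) = v k - h • gradient U (x k) - (h * γ) • v k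
        + Real.sqrt (2 * γ * h) • ξ (k + 1))
    (hx' : ∀ k, x' (k + 1) = x' k + h • v' k)
    (hv' : ∀ k, v' (k + 1) = v' k - h • gradient U (x' k) - (h * γ) • v' k
        + Real.sqrt (2 * γ * h) • ξ (k + 1)) :
    ∀ k : ℕ, modNorm (1 / M) (1 / γ) (x k - x' k, v k - v' k) ≤
      (1 - m * h / (2 * γ)) ^ ((k : ℝ) / 2) *
        modNorm (1 / M) (1 / γ) (x 0 - x' 0, v 0 - v' 0) := by
  have hM0 : 0 < M := hm.trans hmM
  have hsM : 0 < Real.sqrt M := Real.sqrt_pos.2 hM0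
  have hγ0 : 0 < γ := lt_of_lt_of_le (by positivity) hγ
  have hγ2 : 4 * M ≤ γ ^ 2 := by
    have h1 : (2 * Real.sqrt M) ^ 2 ≤ γ ^ 2 := by
      apply pow_le_pow_left₀ (by positivity) hγ
    rw [mul_pow, Real.sq_sqrt hM0.le] at h1
    linarith
  have hh2' : h * γ < 1 / 2 := by
    have := (lt_div_iff₀ (by positivity : (0:ℝ) < 2 * γ)).mp hh2
    linarith
  have hρ : 0 < 1 - m * h / (2 * γ) := by
    have h1 : m * h / (2 * γ) < 1 := by
      rw [div_lt_one (by positivity)]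
      nlinarith [mul_pos hm hh, mul_lt_mul_of_pos_right hmM hh]
    linarith
  -- one-step contraction of the quadratic form
  have step : ∀ k : ℕ,
      ‖x (k+1) - x' (k+1)‖ ^ 2 + 2 * (1/γ) * ⟪x (k+1) - x' (k+1), v (k+1) - v' (k+1)⟫
        + (1/M) * ‖v (k+1) - v' (k+1)‖ ^ 2
      ≤ (1 - m * h / (2 * γ)) * (‖x k - x' k‖ ^ 2
          + 2 * (1/γ) * ⟪x k - x' k, v k - v' k⟫ + (1/M) * ‖v k - v' k‖ ^ 2) := by
    intro k
    set d := x k - x' k with hd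
    set w := v k - v' k with hw
    set g := gradient U (x k) - gradient U (x' k) with hg
    have hdx : x (k+1) - x' (k+1) = d + h • w := by
      rw [hx k, hx' k, hd, hw, smul_sub]; abel
    have hdv : v (k+1) - v' (k+1) = w - h • g - (h * γ) • w := by
      rw [hv k, hv' k, hg, hw, smul_sub, smul_sub]; abel
    have hA1 : m * ‖d‖ ^ 2 ≤ ⟪g, d⟫ := (grad_mono hU hHess (x k) (x' k)).1
    have hA2 : ⟪g, d⟫ ≤ M * ‖d‖ ^ 2 := (grad_mono hU hHess (x k) (x' k)).2
    have hcoco : ‖g‖ ^ 2 ≤ M * ⟪g, d⟫ := grad_coco hm.le hM0 hU hHess (x k) (x' k)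
    have hP : ⟪d, w⟫ ^ 2 ≤ ‖d‖ ^ 2 * ‖w‖ ^ 2 := by
      have h1 := abs_real_inner_le_norm d w
      nlinarith [abs_nonneg ⟪d, w⟫, sq_abs ⟪d, w⟫, norm_nonneg d, norm_nonneg w]
    have hC : ⟪g, w⟫ ^ 2 ≤ ‖w‖ ^ 2 * ‖g‖ ^ 2 := by
      have h1 := abs_real_inner_le_norm g w
      nlinarith [abs_nonneg ⟪g, w⟫, sq_abs ⟪g, w⟫, norm_nonneg g, norm_nonneg w]
    have key := key_scalar m M γ h (‖d‖ ^ 2) (‖w‖ ^ 2) ⟪d, w⟫ ⟪g, d⟫ ⟪g, w⟫ (‖g‖ ^ 2)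
      hm hmM hγ0 hγ2 hh hh2' (by positivity) (by positivity) (by positivity)
      hP hC hA1 hA2 hcoco
    have eX : ‖d + h • w‖ ^ 2 = ‖d‖ ^ 2 + 2 * h * ⟪d, w⟫ + h ^ 2 * ‖w‖ ^ 2 := by
      rw [← real_inner_self_eq_norm_sq, ← real_inner_self_eq_norm_sq,
        ← real_inner_self_eq_norm_sq]
      simp only [inner_add_left, inner_add_right, real_inner_smul_left,
        real_inner_smul_right]
      rw [real_inner_comm w d]
      ring
    have eI : ⟪d + h • w, w - h • g - (h * γ) • w⟫
        = (1 - h * γ) * ⟪d, w⟫ - h * ⟪g, d⟫ + h * (1 - h * γ) * ‖w‖ ^ 2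
          - h ^ 2 * ⟪g, w⟫ := by
      simp only [inner_sub_left, inner_sub_right, inner_add_left, inner_add_right,
        real_inner_smul_left, real_inner_smul_right]
      rw [real_inner_comm d g, real_inner_comm w g, ← real_inner_self_eq_norm_sq]
      ring
    have eW : ‖w - h • g - (h * γ) • w‖ ^ 2
        = (1 - h * γ) ^ 2 * ‖w‖ ^ 2 - 2 * h * (1 - h * γ) * ⟪g, w⟫ + h ^ 2 * ‖g‖ ^ 2 := by
      rw [← real_inner_self_eq_norm_sq, ← real_inner_self_eq_norm_sq,
        ← real_inner_self_eq_norm_sq]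
      simp only [inner_sub_left, inner_sub_right, real_inner_smul_left,
        real_inner_smul_right]
      rw [real_inner_comm w g]
      ring
    rw [hdx, hdv, eX, eI, eW, show (2:ℝ) * (1/γ) = 2/γ from by ring]
    exact key
  intro k
  induction k with
  | zero => simp
  | succ k ih =>
    have hQ1 : modNorm (1/M) (1/γ) (x (k+1) - x' (k+1), v (k+1) - v' (k+1))
        = Real.sqrt (‖x (k+1) - x' (k+1)‖ ^ 2
          + 2 * (1/γ) * ⟪x (k+1) - x' (k+1), v (k+1) - v' (k+1)⟫
          + (1/M) * ‖v (k+1) - v' (k+1)‖ ^ 2) := rfl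
    have hQ0 : modNorm (1/M) (1/γ) (x k - x' k, v k - v' k)
        = Real.sqrt (‖x k - x' k‖ ^ 2 + 2 * (1/γ) * ⟪x k - x' k, v k - v' k⟫
          + (1/M) * ‖v k - v' k‖ ^ 2) := rfl
    calc modNorm (1/M) (1/γ) (x (k+1) - x' (k+1), v (k+1) - v' (k+1))
        ≤ Real.sqrt ((1 - m * h / (2 * γ)) * (‖x k - x' k‖ ^ 2
            + 2 * (1/γ) * ⟪x k - x' k, v k - v' k⟫ + (1/M) * ‖v k - v' k‖ ^ 2)) := by
          rw [hQ1]; exact Real.sqrt_le_sqrt (step k)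
      _ = Real.sqrt (1 - m * h / (2 * γ)) * modNorm (1/M) (1/γ) (x k - x' k, v k - v' k) := by
          rw [hQ0, Real.sqrt_mul hρ.le]
      _ ≤ Real.sqrt (1 - m * h / (2 * γ)) * ((1 - m * h / (2 * γ)) ^ ((k : ℝ) / 2) *
            modNorm (1/M) (1/γ) (x 0 - x' 0, v 0 - v' 0)) :=
          mul_le_mul_of_nonneg_left ih (Real.sqrt_nonneg _)
      _ = (1 - m * h / (2 * γ)) ^ (((k : ℕ) + 1 : ℝ) / 2) *
            modNorm (1/M) (1/γ) (x 0 - x' 0, v 0 - v' 0) := by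
          rw [Real.sqrt_eq_rpow, ← mul_assoc, ← Real.rpow_add hρ]
          congr 1
          ring_nf
      _ = (1 - m * h / (2 * γ)) ^ ((((k+1) : ℕ) : ℝ) / 2) *
            modNorm (1/M) (1/γ) (x 0 - x' 0, v 0 - v' 0) := by
          push_cast
          ring_nf
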